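/- Let r ≥ 2, Q < 1/r and suppose F is a graph family with the property that for all large m, the graph U(T_k, m) + T_{m(r-1), r-1} is F-free for some tree T_k of order k, but the number of edges in any F-free n-vertex graph is at most e(T_{n,r}) + Qn. Then k ≤ ⌊1/(1-Qr)⌋. -/

import Mathlib

open SimpleGraph Finset
open scoped Classical

/-- The join `G + H` of two graphs: all edges between the two vertex sets are added. -/
def SimpleGraph.join {α β : Type*} (G : SimpleGraph α) (H : SimpleGraph β) :
    SimpleGraph (α ⊕ β) where
  Adj x y := match x, y with
    | Sum.inl a, Sum.inl b => G.Adj a b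
    | Sum.inr a, Sum.inr b => H.Adj a b
    | Sum.inl _, Sum.inr _ => True
    | Sum.inr _, Sum.inl _ => True
  symm := ⟨by rintro (a | a) (b | b) h <;> first | exact h.symm | trivial⟩
  loopless := ⟨by rintro (a | a) h; exacts [G.loopless.irrefl a h, H.loopless.irrefl a h]⟩

/-- `U(T, m)`: the graph on `m` vertices consisting of as many disjoint copies of the
`k`-vertex graph `T` as possible, together with isolated vertices on the remainder. -/
def treePack {k : ℕ} (T : SimpleGraph (Fin k)) (hk : 0 < k) (m : ℕ) :
    SimpleGraph (Fin m) where
  Adj i j := (i : ℕ) / k = (j : ℕ) / k ∧ (i : ℕ) / k < m / k ∧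
    T.Adj ⟨(i : ℕ) % k, Nat.mod_lt _ hk⟩ ⟨(j : ℕ) % k, Nat.mod_lt _ hk⟩
  symm := ⟨by rintro i j ⟨h1, h2, h3⟩; exact ⟨h1.symm, h1 ▸ h2, h3.symm⟩⟩
  loopless := ⟨by rintro i ⟨-, -, h⟩; exact T.loopless.irrefl _ h⟩

lemma natCard_edgeSet_eq {V : Type} [Fintype V] (G : SimpleGraph V)
    [Fintype G.edgeSet] : Nat.card G.edgeSet = #G.edgeFinset := by
  rw [edgeFinset_card, Nat.card_eq_fintype_card]

lemma join_two_mul_card {α β : Type} [Fintype α] [Fintype β]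
    (G : SimpleGraph α) (H : SimpleGraph β) :
    2 * Nat.card (G.join H).edgeSet
      = 2 * Nat.card G.edgeSet + 2 * Nat.card H.edgeSet
        + 2 * (Fintype.card α * Fintype.card β) := by
  rw [natCard_edgeSet_eq, natCard_edgeSet_eq, natCard_edgeSet_eq]
  have hl : ∀ a : α, (G.join H).degree (Sum.inl a) = G.degree a + Fintype.card β := by
    intro a
    rw [← card_neighborFinset_eq_degree, ← card_neighborFinset_eq_degree]
    have : (G.join H).neighborFinset (Sum.inl a)
        = (G.neighborFinset a).map ⟨Sum.inl, Sum.inl_injective⟩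
          ∪ (univ : Finset β).map ⟨Sum.inr, Sum.inr_injective⟩ := by
      ext x
      cases x <;> rw [mem_neighborFinset] <;> simp [SimpleGraph.join]
    rw [this, card_union_of_disjoint, card_map, card_map, card_univ]
    simp [Finset.disjoint_left]
  have hr : ∀ b : β, (G.join H).degree (Sum.inr b) = H.degree b + Fintype.card α := by
    intro b
    rw [← card_neighborFinset_eq_degree, ← card_neighborFinset_eq_degree]
    have : (G.join H).neighborFinset (Sum.inr b)
        = (H.neighborFinset b).map ⟨Sum.inr, Sum.inr_injective⟩
          ∪ (univ : Finset α).map ⟨Sum.inl, Sum.inl_injective⟩ := by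
      ext x
      cases x <;> rw [mem_neighborFinset] <;> simp [SimpleGraph.join]
    rw [this, card_union_of_disjoint, card_map, card_map, card_univ]
    simp [Finset.disjoint_left]
  have key := (G.join H).sum_degrees_eq_twice_card_edges
  rw [Fintype.sum_sum_type] at key
  simp only [hl, hr, Finset.sum_add_distrib, Finset.sum_const, card_univ, smul_eq_mul] at key
  rw [← key, G.sum_degrees_eq_twice_card_edges.symm, H.sum_degrees_eq_twice_card_edges.symm]
  ring

lemma count_mod_card {n r : ℕ} (hr : 0 < r) (hdvd : r ∣ n) (c : ℕ) (hc : c < r) :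
    #((range n).filter fun x => x % r = c) = n / r := by
  rw [← Finset.card_range (n / r)]
  apply Finset.card_bij' (fun x _ => x / r) (fun j _ => j * r + c)
  · intro x hx
    simp only [mem_filter, mem_range] at hx ⊢
    rw [Nat.div_lt_iff_lt_mul hr, Nat.div_mul_cancel hdvd]
    exact hx.1
  · intro j hj
    simp only [mem_filter, mem_range] at hj ⊢
    refine ⟨?_, by rw [add_comm, Nat.add_mul_mod_self_right]; exact Nat.mod_eq_of_lt hc⟩
    calc j * r + c < j * r + r := by omega
      _ = (j + 1) * r := by ring
      _ ≤ (n / r) * r := Nat.mul_le_mul_right r hj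
      _ = n := Nat.div_mul_cancel hdvd
  · intro x hx
    simp only [mem_filter, mem_range] at hx
    rw [← hx.2, Nat.div_add_mod']
  · intro j hj
    rw [mul_comm, Nat.mul_add_div hr, Nat.div_eq_of_lt hc, add_zero]

lemma count_mod_card_fin {n r : ℕ} (hr : 0 < r) (hdvd : r ∣ n) (c : ℕ) (hc : c < r) :
    #((univ : Finset (Fin n)).filter fun (w : Fin n) => (w : ℕ) % r = c) = n / r := by
  rw [← count_mod_card hr hdvd c hc]
  apply Finset.card_bij (fun (a : Fin n) _ => a.val)
  · intro a ha
    simp only [mem_filter, mem_range, mem_univ, true_and] at ha ⊢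
    exact ⟨a.isLt, ha⟩
  · intro a _ b _ h
    exact Fin.val_injective h
  · intro x hx
    simp only [mem_filter, mem_range] at hx
    exact ⟨⟨x, hx.1⟩, by simp [hx.2], rfl⟩

lemma turan_two_mul_card {n r : ℕ} (hr : 0 < r) (hdvd : r ∣ n) :
    2 * Nat.card (turanGraph n r).edgeSet = n * (n - n / r) := by
  rw [natCard_edgeSet_eq]
  have hdeg : ∀ v : Fin n, (turanGraph n r).degree v = n - n / r := by
    intro v
    rw [← card_neighborFinset_eq_degree]
    have he : (turanGraph n r).neighborFinset v
        = univ \ ((univ : Finset (Fin n)).filter fun (w : Fin n) => (w : ℕ) % r = (v : ℕ) % r) := by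
      ext w
      rw [mem_neighborFinset]
      simp [turanGraph, Fin.ext_iff, eq_comm]
    rw [he, card_sdiff_of_subset (filter_subset _ _), card_univ, Fintype.card_fin,
      count_mod_card_fin hr hdvd _ (Nat.mod_lt _ hr)]
  have key := (turanGraph n r).sum_degrees_eq_twice_card_edges
  simp only [hdeg, Finset.sum_const, card_univ, Fintype.card_fin, smul_eq_mul] at key
  omega

lemma sum_blocks {k : ℕ} (d : ℕ → ℕ) (hd : ∀ a b, a % k = b % k → d a = d b) :
    ∀ q : ℕ, ∑ j ∈ range (k * q), d j = q * ∑ j ∈ range k, d j := by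
  intro q
  induction q with
  | zero => simp
  | succ q ih =>
    rw [Nat.mul_succ, Finset.sum_range_add, ih, Nat.succ_mul]
    congr 1
    exact Finset.sum_congr rfl fun j _ => hd _ _ (by simp [Nat.mul_add_mod])

lemma treePack_two_mul_card {k : ℕ} (T : SimpleGraph (Fin k)) (hk : 0 < k) (N : ℕ) :
    2 * Nat.card (treePack T hk (k * N)).edgeSet = N * (2 * Nat.card T.edgeSet) := by
  rw [natCard_edgeSet_eq, natCard_edgeSet_eq]
  have hdiv : k * N / k = N := Nat.mul_div_cancel_left N hk
  set d : ℕ → ℕ := fun j => T.degree ⟨j % k, Nat.mod_lt _ hk⟩ with hd_def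
  have hd : ∀ a b, a % k = b % k → d a = d b := by
    intro a b hab
    exact congrArg (fun v : Fin k => T.degree v)
      (Fin.ext (by simp [hd_def, Nat.mod_mod_of_dvd, hab]))
  have hdeg : ∀ i : Fin (k * N),
      (treePack T hk (k * N)).degree i = d (i : ℕ) := by
    intro i
    have hq : (i : ℕ) / k < N := Nat.div_lt_of_lt_mul i.isLt
    rw [← card_neighborFinset_eq_degree]
    have hlt : ∀ t : Fin k, (i : ℕ) / k * k + (t : ℕ) < k * N := by
      intro t
      calc (i : ℕ) / k * k + (t : ℕ) < (i : ℕ) / k * k + k := by omega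
        _ = ((i : ℕ) / k + 1) * k := by ring
        _ ≤ N * k := Nat.mul_le_mul_right k hq
        _ = k * N := mul_comm _ _
    have he : (treePack T hk (k * N)).neighborFinset i
        = (T.neighborFinset ⟨(i : ℕ) % k, Nat.mod_lt _ hk⟩).map
          ⟨fun t => ⟨(i : ℕ) / k * k + (t : ℕ), hlt t⟩, by
            intro a b hab
            simp only [Fin.mk.injEq, Nat.add_right_cancel_iff] at hab
            exact Fin.val_injective (by omega)⟩ := by
      ext x
      simp only [mem_neighborFinset, Finset.mem_map, Function.Embedding.coeFn_mk]
      constructor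
      · rintro ⟨h1, h2, h3⟩
        refine ⟨⟨(x : ℕ) % k, Nat.mod_lt _ hk⟩, h3, ?_⟩
        apply Fin.val_injective
        simp only [h1]
        exact Nat.div_add_mod' _ _
      · rintro ⟨t, ht, rfl⟩
        have hdx : ((i : ℕ) / k * k + (t : ℕ)) / k = (i : ℕ) / k := by
          rw [mul_comm ((i : ℕ) / k) k, Nat.mul_add_div hk, Nat.div_eq_of_lt t.isLt, add_zero]
        have hmx : ((i : ℕ) / k * k + (t : ℕ)) % k = (t : ℕ) := by
          rw [add_comm, Nat.add_mul_mod_self_right]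
          exact Nat.mod_eq_of_lt t.isLt
        refine ⟨hdx.symm, ?_, ?_⟩
        · rw [hdiv]; exact hq
        · have harg : (⟨((⟨(i : ℕ) / k * k + (t : ℕ), hlt t⟩ : Fin (k * N)) : ℕ) % k,
              Nat.mod_lt _ hk⟩ : Fin k) = t := by
            ext
            exact hmx
          refine (congrArg (T.Adj _) harg).mpr ?_
          exact ht
    rw [he, card_map]
    rfl
  have key := (treePack T hk (k * N)).sum_degrees_eq_twice_card_edges
  have key2 := T.sum_degrees_eq_twice_card_edges
  rw [← key, ← key2]
  have e1 : ∑ v : Fin (k * N), (treePack T hk (k * N)).degree v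
      = ∑ j ∈ range (k * N), d j := by
    rw [← Fin.sum_univ_eq_sum_range d (k * N)]
    exact Finset.sum_congr rfl fun i _ => hdeg i
  have e2 : ∑ j ∈ range k, d j = ∑ v : Fin k, T.degree v := by
    rw [← Fin.sum_univ_eq_sum_range d k]
    exact Finset.sum_congr rfl fun t _ =>
      congrArg (fun v : Fin k => T.degree v) (Fin.ext (by simp [hd_def, Nat.mod_eq_of_lt t.isLt]))
  rw [e1, sum_blocks d hd, e2]

set_option maxHeartbeats 1000000 in
theorem stmt1 {k r : ℕ} (hr : 2 ≤ r) (hk : 0 < k) (Q : ℝ) (hQ : Q < 1 / r)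
    (Free : ∀ {V : Type} [Fintype V], SimpleGraph V → Prop)
    (hiso : ∀ {V W : Type} [Fintype V] [Fintype W] (G : SimpleGraph V) (H : SimpleGraph W),
      Nonempty (G ≃g H) → (Free G ↔ Free H))
    (T : SimpleGraph (Fin k)) (hT : T.IsTree)
    (hfree : ∃ M : ℕ, ∀ m ≥ M,
      Free ((treePack T hk m).join (turanGraph (m * (r - 1)) (r - 1))))
    (hex : ∀ (n : ℕ) (G : SimpleGraph (Fin n)), Free G →
      (G.edgeFinset.card : ℝ) ≤ ((turanGraph n r).edgeFinset.card : ℝ) + Q * n) :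
    k ≤ Nat.floor (1 / (1 - Q * r)) := by
  obtain ⟨s, rfl⟩ : ∃ s, r = s + 2 := ⟨r - 2, by omega⟩
  obtain ⟨M, hM⟩ := hfree
  set N := max M 1 with hN
  have hN1 : 1 ≤ N := le_max_right M 1
  have hfree' := hM (k * N) (le_trans (le_max_left M 1) (Nat.le_mul_of_pos_left N hk))
  have hfreeJ : Free ((treePack T hk (k * N)).join
      (turanGraph ((k * N) * (s + 1)) (s + 1))) := hfree'
  let e : (Fin (k * N) ⊕ Fin ((k * N) * (s + 1))) ≃ Fin ((k * N) + (k * N) * (s + 1)) :=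
    finSumFinEquiv
  have iso := SimpleGraph.Iso.map e
    ((treePack T hk (k * N)).join (turanGraph ((k * N) * (s + 1)) (s + 1)))
  have hfreeG' := (hiso _ _ ⟨iso⟩).mp hfreeJ
  have hx := hex ((k * N) + (k * N) * (s + 1)) _ hfreeG'
  -- convert everything to `Nat.card`
  simp only [edgeFinset_card, ← Nat.card_eq_fintype_card] at hx
  have hGJ : Nat.card ((treePack T hk (k * N)).join
        (turanGraph ((k * N) * (s + 1)) (s + 1))).edgeSet
      = Nat.card (((treePack T hk (k * N)).join
        (turanGraph ((k * N) * (s + 1)) (s + 1))).map e).edgeSet :=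
    Nat.card_congr iso.mapEdgeSet
  have hTcard : Nat.card T.edgeSet = k - 1 := by
    have h1 := hT.card_edgeFinset
    simp only [Fintype.card_fin] at h1
    rw [natCard_edgeSet_eq]
    omega
  have ht1 : 2 * Nat.card (treePack T hk (k * N)).edgeSet = N * (2 * (k - 1)) := by
    rw [treePack_two_mul_card T hk N, hTcard]
  have ht2 : 2 * Nat.card (turanGraph ((k * N) * (s + 1)) (s + 1)).edgeSet
      = ((k * N) * (s + 1)) * ((k * N) * s) := by
    rw [turan_two_mul_card (by omega) ⟨k * N, by ring⟩, Nat.mul_div_cancel _ (by omega)]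
    congr 1
    rw [Nat.mul_succ, Nat.add_sub_cancel]
  have ht3 : 2 * Nat.card (turanGraph ((k * N) + (k * N) * (s + 1)) (s + 2)).edgeSet
      = ((k * N) * (s + 2)) * ((k * N) * (s + 1)) := by
    have hdvd : (s + 2) ∣ ((k * N) + (k * N) * (s + 1)) := ⟨k * N, by ring⟩
    rw [turan_two_mul_card (by omega) hdvd]
    have h1 : (k * N) + (k * N) * (s + 1) = (k * N) * (s + 2) := by ring
    rw [h1, Nat.mul_div_cancel _ (by omega)]
    congr 1
    rw [Nat.mul_succ, Nat.add_sub_cancel]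
  have hJ2 := join_two_mul_card (treePack T hk (k * N)) (turanGraph ((k * N) * (s + 1)) (s + 1))
  simp only [Fintype.card_fin] at hJ2
  have hkey : Nat.card ((treePack T hk (k * N)).join
        (turanGraph ((k * N) * (s + 1)) (s + 1))).edgeSet
      = Nat.card (turanGraph ((k * N) + (k * N) * (s + 1)) (s + 2)).edgeSet + N * (k - 1) := by
    have hkey2 : 2 * Nat.card ((treePack T hk (k * N)).join
          (turanGraph ((k * N) * (s + 1)) (s + 1))).edgeSet
        = 2 * Nat.card (turanGraph ((k * N) + (k * N) * (s + 1)) (s + 2)).edgeSet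
          + 2 * (N * (k - 1)) := by
      rw [hJ2, ht1, ht2, ht3]
      ring
    exact Nat.eq_of_mul_eq_mul_left (show 0 < 2 by norm_num)
      (hkey2.trans (Nat.mul_add 2 _ _).symm)
  rw [← hGJ, hkey] at hx
  -- now real arithmetic
  push_cast [Nat.cast_sub hk] at hx
  have hNpos : (0 : ℝ) < N := by positivity
  have h5 : (k : ℝ) - 1 ≤ Q * ((k : ℝ) * ((s : ℝ) + 2)) := by
    have h6 : (N : ℝ) * ((k : ℝ) - 1) ≤ (N : ℝ) * (Q * ((k : ℝ) * ((s : ℝ) + 2))) := by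
      nlinarith [hx]
    exact le_of_mul_le_mul_left h6 hNpos
  have hrpos : (0 : ℝ) < (s : ℝ) + 2 := by positivity
  have hQs : Q < 1 / ((s : ℝ) + 2) := by push_cast at hQ; exact hQ
  have hQr : Q * ((s : ℝ) + 2) < 1 := by
    calc Q * ((s : ℝ) + 2) < (1 / ((s : ℝ) + 2)) * ((s : ℝ) + 2) :=
          mul_lt_mul_of_pos_right hQs hrpos
      _ = 1 := by field_simp
  have hpos : (0 : ℝ) < 1 - Q * ((s : ℝ) + 2) := by linarith
  have hfin : (k : ℝ) ≤ 1 / (1 - Q * ((s : ℝ) + 2)) := by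
    rw [le_div_iff₀ hpos]
    nlinarith [h5]
  apply Nat.le_floor
  exact hfin.trans_eq (by norm_num)
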